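/- Let f be a continuously differentiable function from (0,∞) to (0,∞) with f(t) → 0 as t → ∞ and such that −f′ is regularly varying at infinity with index −1. Then f is slowly varying at infinity, and there exists a function L : (0,∞) → (0,∞), slowly varying at infinity, such that ∫₁^∞ L(t)²/t dt < ∞ and ∫_Δ^∞ L(s)²/s ds ~ f(Δ) as Δ → ∞. -/

import Mathlib

open MeasureTheory Filter Set

/-- `L : (0,∞) → (0,∞)` is slowly varying at infinity if `L(xt)/L(t) → 1` as `t → ∞`
for every `x > 0`. -/
def SlowlyVarying (L : ℝ → ℝ) : Prop :=
  ∀ x > (0:ℝ), Filter.Tendsto (fun t => L (x * t) / L t) Filter.atTop (nhds 1)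



/-- Uniform convergence theorem core, additive form, via Baire category. -/
lemma uct_aux (h : ℝ → ℝ) (hcont : Continuous h)
    (hconv : ∀ c : ℝ, Tendsto (fun t => h (t + c) - h t) atTop (nhds 0)) :
    ∀ C > (0:ℝ), ∀ ε > (0:ℝ), ∀ᶠ t in atTop, ∀ c ∈ Icc (0:ℝ) C, |h (t + c) - h t| ≤ ε := by
  intro C hC ε hε
  set α : ℝ := ε / 3 with hα
  have hα0 : 0 < α := by positivity
  set T : ℕ → Set ℝ := fun n => {c : ℝ | ∀ t : ℝ, (n : ℝ) ≤ t → |h (t + c) - h t| ≤ α} with hT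
  have hTclosed : ∀ n, IsClosed (T n) := by
    intro n
    have : T n = ⋂ (t : ℝ) (_ : (n:ℝ) ≤ t), {c : ℝ | |h (t + c) - h t| ≤ α} := by
      ext c; simp [hT, Set.mem_iInter]
    rw [this]
    refine isClosed_iInter fun t => isClosed_iInter fun _ => ?_
    exact isClosed_le (by continuity) continuous_const
  have hTunion : ⋃ n, T n = univ := by
    refine eq_univ_of_forall fun c => ?_
    have := (hconv c)
    rw [NormedAddCommGroup.tendsto_nhds_zero] at this
    have h2 := this α hα0
    rw [eventually_atTop] at h2
    obtain ⟨N, hN⟩ := h2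
    refine Set.mem_iUnion.mpr ⟨⌈N⌉₊, fun t ht => ?_⟩
    have : N ≤ t := le_trans (Nat.le_ceil N) ht
    simpa [Real.norm_eq_abs] using (hN t this).le
  obtain ⟨n, hn⟩ := nonempty_interior_of_iUnion_of_closed hTclosed hTunion
  obtain ⟨c₀, hc₀⟩ := hn
  obtain ⟨r, hr0, hball⟩ := Metric.isOpen_iff.mp isOpen_interior c₀ hc₀
  set a : ℝ := c₀ - r / 2
  set b : ℝ := c₀ + r / 2
  have hab : a < b := by simp [a, b]; linarith
  have hIcc : Icc a b ⊆ T n := by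
    intro x hx
    have : x ∈ Metric.ball c₀ r := by
      rw [Metric.mem_ball, Real.dist_eq, abs_lt]
      constructor <;> [skip; skip] <;> simp [a, b] at hx <;> linarith [hx.1, hx.2]
    exact interior_subset (hball this)
  set δ : ℝ := b - a with hδdef
  have hδ0 : 0 < δ := by linarith
  -- small step bound
  have hsmall : ∀ t : ℝ, (n:ℝ) ≤ t → ∀ c ∈ Icc (0:ℝ) δ, |h (t + c) - h t| ≤ 2 * α := by
    intro t ht c hc
    have h1 : a + c ∈ T n := hIcc ⟨by linarith [hc.1], by simp [hδdef] at hc; linarith [hc.2]⟩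
    have h2 : a ∈ T n := hIcc ⟨le_refl a, hab.le⟩
    have e1 : |h (t + (a + c)) - h t| ≤ α := h1 t ht
    have e2 : |h ((t + c) + a) - h (t + c)| ≤ α := h2 (t + c) (by linarith [hc.1])
    have : h (t + c) - h t = (h (t + (a + c)) - h t) - (h ((t + c) + a) - h (t + c)) := by
      ring_nf
    rw [this]
    calc |(h (t + (a + c)) - h t) - (h ((t + c) + a) - h (t + c))|
        ≤ |h (t + (a + c)) - h t| + |h ((t + c) + a) - h (t + c)| := abs_sub _ _
      _ ≤ 2 * α := by linarith
  set K : ℕ := ⌈C / δ⌉₊ with hK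
  -- grid bound, eventually
  have hgrid : ∀ᶠ t in atTop, ∀ k ∈ Finset.range (K + 1), |h (t + k * δ) - h t| ≤ α := by
    rw [Filter.eventually_all_finset]
    intro k _
    have := (hconv (k * δ))
    rw [NormedAddCommGroup.tendsto_nhds_zero] at this
    filter_upwards [this α hα0] with t ht
    simpa [Real.norm_eq_abs] using ht.le
  filter_upwards [hgrid, eventually_ge_atTop (n:ℝ)] with t hgridt htn
  intro c hc
  set k : ℕ := ⌊c / δ⌋₊ with hk
  have hkδ : (k : ℝ) * δ ≤ c := by
    rw [← le_div_iff₀ hδ0]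
    exact Nat.floor_le (div_nonneg hc.1 hδ0.le)
  have hcr : c - (k:ℝ) * δ ≤ δ := by
    have := Nat.lt_floor_add_one (c / δ)
    have h2 : c / δ < (k:ℝ) + 1 := by exact_mod_cast this
    have := (div_lt_iff₀ hδ0).mp h2
    linarith
  have hkK : k ≤ K := by
    have h1 : c / δ ≤ C / δ := by gcongr; exact hc.2
    exact le_trans (Nat.floor_le_floor h1) (Nat.floor_le_ceil _)
  have hkδ0 : (0:ℝ) ≤ (k:ℝ) * δ := by positivity
  have hgridk : |h (t + (k:ℝ) * δ) - h t| ≤ α :=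
    hgridt k (Finset.mem_range.mpr (Nat.lt_succ_of_le hkK))
  have hsm : |h ((t + (k:ℝ) * δ) + (c - (k:ℝ)*δ)) - h (t + (k:ℝ)*δ)| ≤ 2 * α :=
    hsmall (t + (k:ℝ)*δ) (by linarith) _ ⟨by linarith, hcr⟩
  have heq : h (t + c) - h t
      = (h ((t + (k:ℝ) * δ) + (c - (k:ℝ)*δ)) - h (t + (k:ℝ)*δ)) + (h (t + (k:ℝ)*δ) - h t) := by
    ring_nf
  rw [heq]
  calc |(h ((t + (k:ℝ) * δ) + (c - (k:ℝ)*δ)) - h (t + (k:ℝ)*δ)) + (h (t + (k:ℝ)*δ) - h t)|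
      ≤ |h ((t + (k:ℝ) * δ) + (c - (k:ℝ)*δ)) - h (t + (k:ℝ)*δ)| + |h (t + (k:ℝ)*δ) - h t| :=
        abs_add_le _ _
    _ ≤ ε := by rw [hα] at *; linarith

open intervalIntegral in
lemma my_integral_inv {a b : ℝ} (h : (0:ℝ) ∉ Set.uIcc a b) :
    ∫ x in a..b, x⁻¹ = Real.log (b / a) :=
  integral_inv h

/-- Corollary 6.4, part 2: if `f : (0,∞) → (0,∞)` is continuously differentiable, `f(t) → 0`
as `t → ∞`, and `−f′ ∈ RV_∞(−1)` (i.e. `−f′(t) = t⁻¹ ℓ(t)` with `ℓ` slowly varying), then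
`f` is slowly varying, and there is a slowly varying `L : (0,∞) → (0,∞)` with
`∫₁^∞ L(t)²/t dt < ∞` and `∫_Δ^∞ L(s)²/s ds ~ f(Δ)` as `Δ → ∞`. -/
theorem blackScholesLongMemory_arbitrary_decay
    (f f' : ℝ → ℝ)
    (hfpos : ∀ t > (0:ℝ), 0 < f t)
    (hderiv : ∀ t > (0:ℝ), HasDerivAt f (f' t) t)
    (hf'cont : ContinuousOn f' (Ioi 0))
    (hflim : Tendsto f atTop (nhds 0))
    (ℓ : ℝ → ℝ) (hℓpos : ∀ t > (0:ℝ), 0 < ℓ t) (hℓ : SlowlyVarying ℓ)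
    (hRV : ∀ t > (0:ℝ), -f' t = t ^ (-1:ℝ) * ℓ t) :
    SlowlyVarying f ∧
      ∃ L : ℝ → ℝ, (∀ t > (0:ℝ), 0 < L t) ∧ SlowlyVarying L ∧
        IntegrableOn (fun t => L t ^ 2 / t) (Ioi 1) ∧
        Tendsto (fun Δ => (∫ s in Ioi Δ, L s ^ 2 / s) / f Δ) atTop (nhds 1) := by
  -- `-f' t = t⁻¹ * ℓ t` in usual inverse form
  have hRV' : ∀ t > (0:ℝ), -f' t = t⁻¹ * ℓ t := by
    intro t ht
    rw [hRV t ht, Real.rpow_neg_one]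
  set g : ℝ → ℝ := fun t => t * (-f' t) with hgdef
  have hg_eq : ∀ t > (0:ℝ), g t = ℓ t := by
    intro t ht
    simp only [hgdef]
    rw [hRV' t ht]
    field_simp
  have hgpos : ∀ t > (0:ℝ), 0 < g t := fun t ht => (hg_eq t ht) ▸ hℓpos t ht
  have hgcont : ContinuousOn g (Ioi 0) := continuousOn_id.mul hf'cont.neg
  -- the log-scale function
  set h : ℝ → ℝ := fun τ => Real.log (g (Real.exp τ)) with hhdef
  have hG : Continuous fun τ => g (Real.exp τ) :=
    hgcont.comp_continuous Real.continuous_exp fun τ => Set.mem_Ioi.mpr (Real.exp_pos τ)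
  have hGpos : ∀ τ, 0 < g (Real.exp τ) := fun τ => hgpos _ (Real.exp_pos τ)
  have hhcont : Continuous h := hG.log fun τ => ne_of_gt (hGpos τ)
  have hhconv : ∀ c : ℝ, Tendsto (fun τ => h (τ + c) - h τ) atTop (nhds 0) := by
    intro c
    have h1 : Tendsto (fun τ => ℓ (Real.exp c * Real.exp τ) / ℓ (Real.exp τ)) atTop (nhds 1) :=
      (hℓ (Real.exp c) (Real.exp_pos c)).comp Real.tendsto_exp_atTop
    have h2 : Tendsto (fun τ => Real.log (ℓ (Real.exp c * Real.exp τ) / ℓ (Real.exp τ)))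
        atTop (nhds 0) := by
      have := (Real.continuousAt_log (one_ne_zero)).tendsto
      rw [Real.log_one] at this
      exact this.comp h1
    refine h2.congr' ?_
    filter_upwards [eventually_ge_atTop (0:ℝ)] with τ _
    have he : Real.exp (τ + c) = Real.exp c * Real.exp τ := by rw [Real.exp_add]; ring
    have hp1 : 0 < ℓ (Real.exp c * Real.exp τ) :=
      hℓpos _ (mul_pos (Real.exp_pos c) (Real.exp_pos τ))
    have hp2 : 0 < ℓ (Real.exp τ) := hℓpos _ (Real.exp_pos τ)
    rw [Real.log_div (ne_of_gt hp1) (ne_of_gt hp2)]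
    simp only [hhdef, he]
    rw [hg_eq _ (mul_pos (Real.exp_pos c) (Real.exp_pos τ)), hg_eq _ (Real.exp_pos τ)]
  -- uniform bound for ratios of g (uniform convergence theorem)
  have uctg : ∀ X > (1:ℝ), ∀ ε > (0:ℝ), ∀ᶠ t in atTop, ∀ s ∈ Icc t (X * t),
      Real.exp (-ε) * g t ≤ g s ∧ g s ≤ Real.exp ε * g t := by
    intro X hX ε hε
    have H := uct_aux h hhcont hhconv (Real.log X) (Real.log_pos hX) ε hε
    have H2 := Real.tendsto_log_atTop.eventually H
    filter_upwards [H2, eventually_gt_atTop (0:ℝ)] with t ht ht0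
    intro s hs
    have hs0 : 0 < s := lt_of_lt_of_le ht0 hs.1
    have hc1 : 0 ≤ Real.log s - Real.log t := by
      have := Real.log_le_log ht0 hs.1; linarith
    have hc2 : Real.log s - Real.log t ≤ Real.log X := by
      have h1 : Real.log s ≤ Real.log (X * t) := Real.log_le_log hs0 hs.2
      rw [Real.log_mul (by linarith) (ne_of_gt ht0)] at h1
      linarith
    have key := ht (Real.log s - Real.log t) ⟨hc1, hc2⟩
    have e1 : Real.log t + (Real.log s - Real.log t) = Real.log s := by ring
    rw [e1] at key
    have e2 : h (Real.log s) = Real.log (g s) := by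
      simp only [hhdef, Real.exp_log hs0]
    have e3 : h (Real.log t) = Real.log (g t) := by
      simp only [hhdef, Real.exp_log ht0]
    rw [e2, e3, abs_le] at key
    have hgs : 0 < g s := hgpos s hs0
    have hgt : 0 < g t := hgpos t ht0
    constructor
    · have : Real.log (Real.exp (-ε) * g t) ≤ Real.log (g s) := by
        rw [Real.log_mul (ne_of_gt (Real.exp_pos _)) (ne_of_gt hgt), Real.log_exp]
        linarith [key.1]
      exact (Real.log_le_log_iff (mul_pos (Real.exp_pos _) hgt) hgs).mp this
    · have : Real.log (g s) ≤ Real.log (Real.exp ε * g t) := by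
        rw [Real.log_mul (ne_of_gt (Real.exp_pos _)) (ne_of_gt hgt), Real.log_exp]
        linarith [key.2]
      exact (Real.log_le_log_iff hgs (mul_pos (Real.exp_pos _) hgt)).mp this
  -- quantitative bound on f t - f (X*t)
  have hbound : ∀ X > (1:ℝ), ∀ ε > (0:ℝ), ∀ᶠ t in atTop,
      Real.exp (-ε) * (g t * Real.log X) ≤ f t - f (X * t) ∧
      f t - f (X * t) ≤ Real.exp ε * (g t * Real.log X) := by
    intro X hX ε hε
    filter_upwards [uctg X hX ε hε, eventually_gt_atTop (0:ℝ)] with t huct ht0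
    have htX : t < X * t := by nlinarith
    have hsub : Icc t (X * t) ⊆ Ioi 0 := fun s hs => lt_of_lt_of_le ht0 hs.1
    have huIcc : Set.uIcc t (X * t) = Icc t (X * t) := Set.uIcc_of_le htX.le
    -- FTC
    have hint : IntervalIntegrable f' volume t (X * t) := by
      apply ContinuousOn.intervalIntegrable
      rw [huIcc]; exact hf'cont.mono hsub
    have hftc : ∫ s in t..(X * t), f' s = f (X * t) - f t := by
      apply intervalIntegral.integral_eq_sub_of_hasDerivAt
      · intro s hs
        rw [huIcc] at hs
        exact hderiv s (hsub hs)
      · exact hint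
    have hmain : f t - f (X * t) = ∫ s in t..(X * t), (-f' s) := by
      rw [intervalIntegral.integral_neg, hftc]; ring
    -- comparison integrands
    have hlow : IntervalIntegrable (fun s => Real.exp (-ε) * g t * s⁻¹) volume t (X * t) := by
      apply ContinuousOn.intervalIntegrable
      rw [huIcc]
      exact (continuousOn_const.mul (continuousOn_inv₀.mono (fun s hs => ne_of_gt (hsub hs))))
    have hhigh : IntervalIntegrable (fun s => Real.exp ε * g t * s⁻¹) volume t (X * t) := by
      apply ContinuousOn.intervalIntegrable
      rw [huIcc]
      exact (continuousOn_const.mul (continuousOn_inv₀.mono (fun s hs => ne_of_gt (hsub hs))))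
    have hintneg : IntervalIntegrable (fun s => -f' s) volume t (X * t) := hint.neg
    have hptlow : ∀ s ∈ Icc t (X * t), Real.exp (-ε) * g t * s⁻¹ ≤ -f' s := by
      intro s hs
      have hs0 : 0 < s := hsub hs
      rw [hRV' s hs0, ← hg_eq s hs0]
      have := (huct s hs).1
      rw [mul_comm (s⁻¹) (g s)]
      exact mul_le_mul_of_nonneg_right this (by positivity)
    have hpthigh : ∀ s ∈ Icc t (X * t), -f' s ≤ Real.exp ε * g t * s⁻¹ := by
      intro s hs
      have hs0 : 0 < s := hsub hs
      rw [hRV' s hs0, ← hg_eq s hs0]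
      have := (huct s hs).2
      rw [mul_comm (s⁻¹) (g s)]
      exact mul_le_mul_of_nonneg_right this (by positivity)
    have hinv : ∫ s in t..(X * t), s⁻¹ = Real.log X := by
      rw [my_integral_inv]
      · congr 1
        field_simp
      · rw [huIcc]
        intro hmem
        exact absurd (Set.mem_Ioi.mp (hsub hmem)) (lt_irrefl 0)
    have c1 : ∫ s in t..(X * t), Real.exp (-ε) * g t * s⁻¹
        = Real.exp (-ε) * (g t * Real.log X) := by
      rw [intervalIntegral.integral_const_mul, hinv]; ring
    have c2 : ∫ s in t..(X * t), Real.exp ε * g t * s⁻¹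
        = Real.exp ε * (g t * Real.log X) := by
      rw [intervalIntegral.integral_const_mul, hinv]; ring
    constructor
    · rw [hmain, ← c1]
      exact intervalIntegral.integral_mono_on htX.le hlow hintneg hptlow
    · rw [hmain, ← c2]
      exact intervalIntegral.integral_mono_on htX.le hintneg hhigh hpthigh
  -- key: for x > 1, f(x t)/f t → 1
  have key : ∀ x > (1:ℝ), Tendsto (fun t => f (x * t) / f t) atTop (nhds 1) := by
    intro x hx
    have claim0 : Tendsto (fun t => (f t - f (x * t)) / f t) atTop (nhds 0) := by
      rw [NormedAddCommGroup.tendsto_nhds_zero]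
      intro η hη
      set X : ℝ := Real.exp (2 * Real.exp 2 * Real.log x / η) with hXdef
      have hlogx : 0 < Real.log x := Real.log_pos hx
      have hXarg : 0 < 2 * Real.exp 2 * Real.log x / η := by positivity
      have hX : 1 < X := Real.one_lt_exp_iff.mpr hXarg
      have hlogX : Real.log X = 2 * Real.exp 2 * Real.log x / η := Real.log_exp _
      filter_upwards [hbound x hx 1 one_pos, hbound X hX 1 one_pos, eventually_gt_atTop (0:ℝ)]
        with t hbx hbX ht0
      have hft : 0 < f t := hfpos t ht0
      have hfXt : 0 < f (X * t) := hfpos _ (by nlinarith)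
      have hgt : 0 < g t := hgpos t ht0
      have hflb : Real.exp (-1) * (g t * Real.log X) ≤ f t := le_trans hbX.1 (by linarith)
      have hnum_nonneg : 0 ≤ f t - f (x * t) := by
        refine le_trans ?_ hbx.1
        positivity
      have hratio : (f t - f (x * t)) / f t ≤ η / 2 := by
        rw [div_le_iff₀ hft]
        calc f t - f (x * t) ≤ Real.exp 1 * (g t * Real.log x) := hbx.2
          _ = η / 2 * (Real.exp (-1) * (g t * Real.log X)) := by
              rw [hlogX, Real.exp_neg]
              have h2 : Real.exp 2 = Real.exp 1 * Real.exp 1 := by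
                rw [← Real.exp_add]; norm_num
              rw [h2]
              have hE : Real.exp 1 ≠ 0 := ne_of_gt (Real.exp_pos 1)
              have hη' : η ≠ 0 := ne_of_gt hη
              field_simp
          _ ≤ η / 2 * f t := mul_le_mul_of_nonneg_left hflb (by positivity)
      rw [Real.norm_eq_abs, abs_of_nonneg (div_nonneg hnum_nonneg hft.le)]
      linarith
    have hT : Tendsto (fun t => 1 - (f t - f (x * t)) / f t) atTop (nhds 1) := by
      simpa using (tendsto_const_nhds (x := (1:ℝ))).sub claim0
    refine Filter.Tendsto.congr' ?_ hT
    filter_upwards [eventually_gt_atTop (0:ℝ)] with t ht0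
    have hft : f t ≠ 0 := ne_of_gt (hfpos t ht0)
    field_simp
    ring
  -- slow variation of f
  have hSVf : SlowlyVarying f := by
    intro x hx
    rcases lt_trichotomy x 1 with hx1 | rfl | hx1
    · have hy : (1:ℝ) < 1 / x := by rw [lt_div_iff₀ hx]; linarith
      have T1 := key (1/x) hy
      have hmul : Tendsto (fun t : ℝ => x * t) atTop atTop :=
        Tendsto.const_mul_atTop hx tendsto_id
      have T2 : Tendsto (fun t => f ((1/x) * (x * t)) / f (x * t)) atTop (nhds 1) :=
        T1.comp hmul
      have T3 := T2.inv₀ one_ne_zero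
      rw [inv_one] at T3
      refine T3.congr fun t => ?_
      have he : (1/x) * (x * t) = t := by field_simp
      rw [he, inv_div]
    · refine Filter.Tendsto.congr' ?_ (tendsto_const_nhds (x := (1:ℝ)))
      filter_upwards [eventually_gt_atTop (0:ℝ)] with t ht0
      rw [one_mul, div_self (ne_of_gt (hfpos t ht0))]
    · exact key x hx1
  -- construction of L
  have hderivNeg : ∀ s > (0:ℝ), HasDerivAt (fun u => -f u) (-f' s) s := fun s hs => (hderiv s hs).neg
  have hfcontIci : ∀ a > (0:ℝ), ContinuousWithinAt (fun u => -f u) (Ici a) a := fun a ha =>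
    ((hderiv a ha).continuousAt.neg).continuousWithinAt
  have hnegtend : Tendsto (fun u => -f u) atTop (nhds 0) := by simpa using hflim.neg
  have hIntOn : ∀ a > (0:ℝ), IntegrableOn (fun s => -f' s) (Ioi a) := by
    intro a ha
    refine integrableOn_Ioi_deriv_of_nonneg (hfcontIci a ha)
      (fun s hs => hderivNeg s (lt_trans ha hs)) ?_ hnegtend
    intro s hs
    have hs0 : 0 < s := lt_trans ha hs
    rw [hRV' s hs0]
    exact le_of_lt (mul_pos (inv_pos.mpr hs0) (hℓpos s hs0))
  have hIeq : ∀ a > (0:ℝ), ∫ s in Ioi a, (-f' s) = f a := by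
    intro a ha
    have := integral_Ioi_of_hasDerivAt_of_tendsto (hfcontIci a ha)
      (fun s hs => hderivNeg s (lt_trans ha hs)) (hIntOn a ha) hnegtend
    simpa using this
  have hLsq : ∀ s > (0:ℝ), Real.sqrt (ℓ s) ^ 2 / s = -f' s := by
    intro s hs
    rw [Real.sq_sqrt (le_of_lt (hℓpos s hs)), hRV' s hs, div_eq_inv_mul]
  refine ⟨hSVf, fun t => Real.sqrt (ℓ t), fun t ht => Real.sqrt_pos.mpr (hℓpos t ht), ?_, ?_, ?_⟩
  · -- slow variation of L
    intro x hx
    have h1 : Tendsto (fun t => Real.sqrt (ℓ (x * t) / ℓ t)) atTop (nhds 1) := by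
      have := (Real.continuous_sqrt.tendsto 1).comp (hℓ x hx)
      simpa [Function.comp_def] using this
    refine Filter.Tendsto.congr' ?_ h1
    filter_upwards [eventually_gt_atTop (0:ℝ)] with t ht0
    rw [Real.sqrt_div (le_of_lt (hℓpos _ (mul_pos hx ht0)))]
  · -- integrability
    exact (hIntOn 1 one_pos).congr_fun
      (fun s hs => (hLsq s (lt_trans one_pos hs)).symm) measurableSet_Ioi
  · -- the asymptotic equivalence
    have hev : ∀ᶠ Δ in atTop, (∫ s in Ioi Δ, Real.sqrt (ℓ s) ^ 2 / s) / f Δ = 1 := by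
      filter_upwards [eventually_gt_atTop (0:ℝ)] with Δ hΔ
      have e1 : ∫ s in Ioi Δ, Real.sqrt (ℓ s) ^ 2 / s = ∫ s in Ioi Δ, -f' s :=
        setIntegral_congr_fun measurableSet_Ioi fun s hs => hLsq s (lt_trans hΔ hs)
      rw [e1, hIeq Δ hΔ, div_self (ne_of_gt (hfpos Δ hΔ))]
    exact Filter.Tendsto.congr'
      (by filter_upwards [hev] with Δ hh using hh.symm) (tendsto_const_nhds (x := (1:ℝ)))
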